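/- Let f : (0,∞) → ℝ_{≥0} be a normalized operator monotone function, let ρ_AB be a bipartite density matrix on ℂ^{d_A} ⊗ ℂ^{d_B}, and let V : ℂ^{d_A} → ℂ^{d_{A'}} and W : ℂ^{d_B} → ℂ^{d_{B'}} be isometries (V†V = 1, W†W = 1). Then μ_f(A:B)_{ρ_AB} = μ_f(A':B')_{(V⊗W)ρ_AB(V⊗W)†}, and the same equality holds for μ_f^Lin. -/

import Mathlib

open scoped Kronecker ComplexOrder
open Matrix

noncomputable section

namespace QPaper

variable {ι ιA ιB ιA' ιB' ιR : Type*}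

/-- A density matrix: a positive semidefinite complex matrix of trace one. -/
def IsDensity [Fintype ι] (ρ : Matrix ι ι ℂ) : Prop :=
  ρ.PosSemidef ∧ ρ.trace = 1

/-- Apply `f : ℝ → ℝ` to a Hermitian matrix spectrally (junk value `0` otherwise). -/
def matFun [Fintype ι] [DecidableEq ι] (f : ℝ → ℝ) (A : Matrix ι ι ℂ) : Matrix ι ι ℂ :=
  if hA : A.IsHermitian then
    (hA.eigenvectorUnitary : Matrix ι ι ℂ) *
      Matrix.diagonal (fun i => (f (hA.eigenvalues i) : ℂ)) *
      star (hA.eigenvectorUnitary : Matrix ι ι ℂ)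
  else 0

/-- `f` is operator monotone on `(0,∞)`: it is continuous there and for all `n` and all
positive definite `A ≤ B` one has `f(A) ≤ f(B)` in the Loewner order. -/
def IsOperatorMonotone (f : ℝ → ℝ) : Prop :=
  ContinuousOn f (Set.Ioi 0) ∧
    ∀ (n : ℕ) (A B : Matrix (Fin n) (Fin n) ℂ), A.PosDef → B.PosDef →
      (B - A).PosSemidef → (matFun f B - matFun f A).PosSemidef

/-- `f` is symmetry inducing: `f x = x f (1/x)` for `x > 0`. -/
def IsSymmetryInducing (f : ℝ → ℝ) : Prop :=
  ∀ x : ℝ, 0 < x → f x = x * f x⁻¹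

/-- Real powers of a Hermitian matrix via the spectral decomposition. -/
def matPow [Fintype ι] [DecidableEq ι] (σ : Matrix ι ι ℂ) (t : ℝ) : Matrix ι ι ℂ :=
  if hσ : σ.IsHermitian then
    (hσ.eigenvectorUnitary : Matrix ι ι ℂ) *
      Matrix.diagonal (fun i => ((hσ.eigenvalues i ^ t : ℝ) : ℂ)) *
      star (hσ.eigenvectorUnitary : Matrix ι ι ℂ)
  else 0

/-- The operator `J_{f,σ}(X) = Σ_{i,j} λ_j f(λ_i/λ_j) Q_i X Q_j`. -/
def Jmap [Fintype ι] [DecidableEq ι] (f : ℝ → ℝ) (σ X : Matrix ι ι ℂ) : Matrix ι ι ℂ :=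
  if hσ : σ.IsHermitian then
    (hσ.eigenvectorUnitary : Matrix ι ι ℂ) *
      (Matrix.of fun i j =>
        ((hσ.eigenvalues j * f (hσ.eigenvalues i / hσ.eigenvalues j) : ℝ) : ℂ) *
          ((star (hσ.eigenvectorUnitary : Matrix ι ι ℂ) * X *
              (hσ.eigenvectorUnitary : Matrix ι ι ℂ)) i j)) *
      star (hσ.eigenvectorUnitary : Matrix ι ι ℂ)
  else 0

/-- The operator `J_{f,σ}⁻¹(X) = Σ_{i,j} (λ_j f(λ_i/λ_j))⁻¹ Q_i X Q_j`. -/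
def JmapInv [Fintype ι] [DecidableEq ι] (f : ℝ → ℝ) (σ X : Matrix ι ι ℂ) : Matrix ι ι ℂ :=
  if hσ : σ.IsHermitian then
    (hσ.eigenvectorUnitary : Matrix ι ι ℂ) *
      (Matrix.of fun i j =>
        (((hσ.eigenvalues j * f (hσ.eigenvalues i / hσ.eigenvalues j))⁻¹ : ℝ) : ℂ) *
          ((star (hσ.eigenvectorUnitary : Matrix ι ι ℂ) * X *
              (hσ.eigenvectorUnitary : Matrix ι ι ℂ)) i j)) *
      star (hσ.eigenvectorUnitary : Matrix ι ι ℂ)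
  else 0

/-- Hilbert–Schmidt inner product `⟨A,B⟩ = Tr[A†B]`. -/
def hsInner [Fintype ι] (A B : Matrix ι ι ℂ) : ℂ := (Aᴴ * B).trace

/-- Noncommutative variance `Var_{f,σ}(X) = ⟨X − Tr[σX]·1, J_{f,σ}(X − Tr[σX]·1)⟩`. -/
def varF [Fintype ι] [DecidableEq ι] (f : ℝ → ℝ) (σ X : Matrix ι ι ℂ) : ℂ :=
  hsInner (X - (σ * X).trace • (1 : Matrix ι ι ℂ))
    (Jmap f σ (X - (σ * X).trace • (1 : Matrix ι ι ℂ)))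

/-- Partial trace over the second (B) factor: `ρ_A`. -/
def ptraceB [Fintype ιB] (M : Matrix (ιA × ιB) (ιA × ιB) ℂ) : Matrix ιA ιA ℂ :=
  Matrix.of fun a a' => ∑ b, M (a, b) (a', b)

/-- Partial trace over the first (A) factor: `ρ_B`. -/
def ptraceA [Fintype ιA] (M : Matrix (ιA × ιB) (ιA × ιB) ℂ) : Matrix ιB ιB ℂ :=
  Matrix.of fun b b' => ∑ a, M (a, b) (a, b')

/-- Support projection of a Hermitian matrix. -/
def suppProj [Fintype ι] [DecidableEq ι] (σ : Matrix ι ι ℂ) : Matrix ι ι ℂ :=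
  if hσ : σ.IsHermitian then
    (hσ.eigenvectorUnitary : Matrix ι ι ℂ) *
      Matrix.diagonal (fun i => if 0 < hσ.eigenvalues i then (1 : ℂ) else 0) *
      star (hσ.eigenvectorUnitary : Matrix ι ι ℂ)
  else 0

/-- Rank-one spectral projection `Q_i` of a Hermitian matrix. -/
def eigProj [Fintype ι] [DecidableEq ι] {σ : Matrix ι ι ℂ} (hσ : σ.IsHermitian) (i : ι) :
    Matrix ι ι ℂ :=
  (hσ.eigenvectorUnitary : Matrix ι ι ℂ) * Matrix.single i i 1 *
    star (hσ.eigenvectorUnitary : Matrix ι ι ℂ)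

/-- `⟨X,X⟩_{f,σ} = Σ_{i,j} λ_j f(λ_i/λ_j) Tr[X† Q_i X Q_j]`, the sum running over the
strictly positive part of the spectrum of `σ`. -/
def innerF [Fintype ι] [DecidableEq ι] (f : ℝ → ℝ) (σ X : Matrix ι ι ℂ) : ℂ :=
  if hσ : σ.IsHermitian then
    ∑ i, ∑ j,
      if 0 < hσ.eigenvalues i ∧ 0 < hσ.eigenvalues j then
        ((hσ.eigenvalues j * f (hσ.eigenvalues i / hσ.eigenvalues j) : ℝ) : ℂ) *
          (Xᴴ * eigProj hσ i * X * eigProj hσ j).trace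
      else 0
  else 0

/-- The `f`-maximal correlation coefficient `μ_f(A:B)_ρ` (Hermitian optimizers). -/
def muF [Fintype ιA] [DecidableEq ιA] [Fintype ιB] [DecidableEq ιB]
    (f : ℝ → ℝ) (ρ : Matrix (ιA × ιB) (ιA × ιB) ℂ) : ℝ :=
  sSup { r : ℝ | ∃ (X : Matrix ιA ιA ℂ) (Y : Matrix ιB ιB ℂ),
    X.IsHermitian ∧ Y.IsHermitian ∧
    suppProj (ptraceB ρ) * X * suppProj (ptraceB ρ) = X ∧
    suppProj (ptraceA ρ) * Y * suppProj (ptraceA ρ) = Y ∧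
    (ptraceB ρ * X).trace = 0 ∧ (ptraceA ρ * Y).trace = 0 ∧
    innerF f (ptraceB ρ) X = 1 ∧ innerF f (ptraceA ρ) Y = 1 ∧
    r = ‖((X ⊗ₖ Yᴴ) * ρ).trace‖ }

/-- The linear-operator relaxation `μ_f^Lin(A:B)_ρ`. -/
def muLin [Fintype ιA] [DecidableEq ιA] [Fintype ιB] [DecidableEq ιB]
    (f : ℝ → ℝ) (ρ : Matrix (ιA × ιB) (ιA × ιB) ℂ) : ℝ :=
  sSup { r : ℝ | ∃ (X : Matrix ιA ιA ℂ) (Y : Matrix ιB ιB ℂ),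
    suppProj (ptraceB ρ) * X * suppProj (ptraceB ρ) = X ∧
    suppProj (ptraceA ρ) * Y * suppProj (ptraceA ρ) = Y ∧
    (ptraceB ρ * X).trace = 0 ∧ (ptraceA ρ * Y).trace = 0 ∧
    innerF f (ptraceB ρ) X = 1 ∧ innerF f (ptraceA ρ) Y = 1 ∧
    r = ‖((X ⊗ₖ Yᴴ) * ρ).trace‖ }

/-- `μ_{f_AM}(A:B)_ρ` with the simplified normalization `Tr[ρ_A X²] = 1`. -/
def muAM [Fintype ιA] [DecidableEq ιA] [Fintype ιB] [DecidableEq ιB]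
    (ρ : Matrix (ιA × ιB) (ιA × ιB) ℂ) : ℝ :=
  sSup { r : ℝ | ∃ (X : Matrix ιA ιA ℂ) (Y : Matrix ιB ιB ℂ),
    X.IsHermitian ∧ Y.IsHermitian ∧
    suppProj (ptraceB ρ) * X * suppProj (ptraceB ρ) = X ∧
    suppProj (ptraceA ρ) * Y * suppProj (ptraceA ρ) = Y ∧
    (ptraceB ρ * X).trace = 0 ∧ (ptraceA ρ * Y).trace = 0 ∧
    (ptraceB ρ * X * X).trace = 1 ∧ (ptraceA ρ * Y * Y).trace = 1 ∧
    r = ‖((X ⊗ₖ Y) * ρ).trace‖ }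

/-- `μ_{f_GM}(A:B)_τ` with the normalization `Tr[X τ_A^{1/2} X τ_A^{1/2}] = 1`. -/
def muGM [Fintype ιA] [DecidableEq ιA] [Fintype ιB] [DecidableEq ιB]
    (τ : Matrix (ιA × ιB) (ιA × ιB) ℂ) : ℝ :=
  sSup { r : ℝ | ∃ (X : Matrix ιA ιA ℂ) (Y : Matrix ιB ιB ℂ),
    X.IsHermitian ∧ Y.IsHermitian ∧
    suppProj (ptraceB τ) * X * suppProj (ptraceB τ) = X ∧
    suppProj (ptraceA τ) * Y * suppProj (ptraceA τ) = Y ∧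
    (ptraceB τ * X).trace = 0 ∧ (ptraceA τ * Y).trace = 0 ∧
    (X * matPow (ptraceB τ) (1 / 2) * X * matPow (ptraceB τ) (1 / 2)).trace = 1 ∧
    (Y * matPow (ptraceA τ) (1 / 2) * Y * matPow (ptraceA τ) (1 / 2)).trace = 1 ∧
    r = ‖((X ⊗ₖ Yᴴ) * τ).trace‖ }

/-- `χ²_f(ρ‖σ)`, summed over the strictly positive part of the spectrum of `σ`. -/
def chiSq [Fintype ι] [DecidableEq ι] (f : ℝ → ℝ) (ρ σ : Matrix ι ι ℂ) : ℝ :=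
  if hσ : σ.IsHermitian then
    ∑ i, ∑ j,
      if 0 < hσ.eigenvalues i ∧ 0 < hσ.eigenvalues j then
        (hσ.eigenvalues j * f (hσ.eigenvalues i / hσ.eigenvalues j))⁻¹ *
          Complex.normSq
            ((star (hσ.eigenvectorUnitary : Matrix ι ι ℂ) * (ρ - σ) *
              (hσ.eigenvectorUnitary : Matrix ι ι ℂ)) i j)
      else 0
  else 0

/-- Support inclusion `supp ρ ⊆ supp σ` (as kernel containment). -/
def SuppLE [Fintype ι] (ρ σ : Matrix ι ι ℂ) : Prop :=
  ∀ v : ι → ℂ, σ.mulVec v = 0 → ρ.mulVec v = 0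

/-- The input-dependent contraction coefficient `η_{χ²_f}(E,σ)`. -/
def etaChi [Fintype ιA] [DecidableEq ιA] [Fintype ιB] [DecidableEq ιB]
    (f : ℝ → ℝ) (E : Matrix ιA ιA ℂ → Matrix ιB ιB ℂ) (σ : Matrix ιA ιA ℂ) : ℝ :=
  sSup { r : ℝ | ∃ ρ : Matrix ιA ιA ℂ, IsDensity ρ ∧ ρ ≠ σ ∧ SuppLE ρ σ ∧
    r = chiSq f (E ρ) (E σ) / chiSq f ρ σ }

/-- `χ²_f(ρ‖σ) = ⟨ρ−σ, J_{f,σ}⁻¹(ρ−σ)⟩` (Hilbert–Schmidt form). -/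
def chiHS [Fintype ι] [DecidableEq ι] (f : ℝ → ℝ) (ρ σ : Matrix ι ι ℂ) : ℂ :=
  hsInner (ρ - σ) (JmapInv f σ (ρ - σ))

/-- A positive map. -/
def IsPositiveMap [Fintype ιA] [Fintype ιB] (E : Matrix ιA ιA ℂ → Matrix ιB ιB ℂ) : Prop :=
  ∀ X, X.PosSemidef → (E X).PosSemidef

/-- A trace-preserving map. -/
def IsTracePreserving [Fintype ιA] [Fintype ιB]
    (E : Matrix ιA ιA ℂ → Matrix ιB ιB ℂ) : Prop :=
  ∀ X, (E X).trace = X.trace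

/-- The map `E` applied blockwise to a 2×2 block matrix. -/
def blockApply (E : Matrix ιA ιA ℂ → Matrix ιB ιB ℂ)
    (M : Matrix (Fin 2 × ιA) (Fin 2 × ιA) ℂ) : Matrix (Fin 2 × ιB) (Fin 2 × ιB) ℂ :=
  Matrix.of fun x y => E (Matrix.of fun a b => M (x.1, a) (y.1, b)) x.2 y.2

/-- 2-positivity. -/
def Is2Positive [Fintype ιA] [Fintype ιB] (E : Matrix ιA ιA ℂ → Matrix ιB ιB ℂ) : Prop :=
  ∀ M, M.PosSemidef → (blockApply E M).PosSemidef

/-- The Hilbert–Schmidt adjoint `E*` of a linear map `E`. -/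
def hsAdjoint [Fintype ιA] [DecidableEq ιA] [Fintype ιB]
    (E : Matrix ιA ιA ℂ → Matrix ιB ιB ℂ) (Y : Matrix ιB ιB ℂ) : Matrix ιA ιA ℂ :=
  Matrix.of fun a b => ((E (Matrix.single a b 1))ᴴ * Y).trace

/-- The Schwarz inequality `Φ(x†x) ≥ Φ(x)†Φ(x)`. -/
def IsSchwarz [Fintype ιA] [Fintype ιB] (Φ : Matrix ιA ιA ℂ → Matrix ιB ιB ℂ) : Prop :=
  ∀ x, (Φ (xᴴ * x) - (Φ x)ᴴ * Φ x).PosSemidef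

/-- A unital Schwarz map. -/
def IsUnitalSchwarz [Fintype ιA] [DecidableEq ιA] [Fintype ιB] [DecidableEq ιB]
    (Φ : Matrix ιA ιA ℂ → Matrix ιB ιB ℂ) : Prop :=
  IsLinearMap ℂ Φ ∧ Φ 1 = 1 ∧ IsSchwarz Φ

/-- `E` is the Hilbert–Schmidt adjoint of `Φ`, i.e. `⟨Φ A, B⟩ = ⟨A, E B⟩`. -/
def IsAdjointPair' [Fintype ιA] [Fintype ιB]
    (Φ : Matrix ιB ιB ℂ → Matrix ιA ιA ℂ) (E : Matrix ιA ιA ℂ → Matrix ιB ιB ℂ) : Prop :=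
  ∀ (A : Matrix ιB ιB ℂ) (B : Matrix ιA ιA ℂ), ((Φ A)ᴴ * B).trace = (Aᴴ * E B).trace

/-- `E` is the Hilbert–Schmidt adjoint of some unital Schwarz map. -/
def IsAdjointOfUnitalSchwarz [Fintype ιA] [DecidableEq ιA] [Fintype ιB] [DecidableEq ιB]
    (E : Matrix ιA ιA ℂ → Matrix ιB ιB ℂ) : Prop :=
  ∃ Φ : Matrix ιB ιB ℂ → Matrix ιA ιA ℂ, IsUnitalSchwarz Φ ∧ IsAdjointPair' Φ E

/-- The tensor product `E ⊗ F` of maps, acting on bipartite matrices. -/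
def mapKron [Fintype ιA] [DecidableEq ιA]
    (E : Matrix ιA ιA ℂ → Matrix ιA' ιA' ℂ) (F : Matrix ιB ιB ℂ → Matrix ιB' ιB' ℂ)
    (M : Matrix (ιA × ιB) (ιA × ιB) ℂ) : Matrix (ιA' × ιB') (ιA' × ιB') ℂ :=
  ∑ a : ιA, ∑ c : ιA,
    E (Matrix.single a c 1) ⊗ₖ F (Matrix.of fun b d => M (a, b) (c, d))

/-- `id ⊗ E` acting on bipartite matrices (E acting on the second factor). -/
def idKron (E : Matrix ιA ιA ℂ → Matrix ιB ιB ℂ)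
    (M : Matrix (ιR × ιA) (ιR × ιA) ℂ) : Matrix (ιR × ιB) (ιR × ιB) ℂ :=
  Matrix.of fun x y => E (Matrix.of fun a a' => M (x.1, a) (y.1, a')) x.2 y.2

/-- The Choi matrix of a map. -/
def choi [Fintype ιA] [DecidableEq ιA] (E : Matrix ιA ιA ℂ → Matrix ιB ιB ℂ) :
    Matrix (ιA × ιB) (ιA × ιB) ℂ :=
  Matrix.of fun x y => E (Matrix.single x.1 y.1 1) x.2 y.2

/-- A quantum channel: a trace-preserving linear map with positive semidefinite Choi matrix. -/
def IsQChannel [Fintype ιA] [DecidableEq ιA] [Fintype ιB]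
    (E : Matrix ιA ιA ℂ → Matrix ιB ιB ℂ) : Prop :=
  IsLinearMap ℂ E ∧ IsTracePreserving E ∧ (choi E).PosSemidef

/-- The Schrödinger time-reversal map `S_{f,E,σ} = J_{f,σ} ∘ E* ∘ J_{f,E(σ)}⁻¹`. -/
def Smap [Fintype ιA] [DecidableEq ιA] [Fintype ιB] [DecidableEq ιB]
    (f : ℝ → ℝ) (E : Matrix ιA ιA ℂ → Matrix ιB ιB ℂ) (σ : Matrix ιA ιA ℂ)
    (X : Matrix ιB ιB ℂ) : Matrix ιA ιA ℂ :=
  Jmap f σ (hsAdjoint E (JmapInv f (E σ) X))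

/-- Rearrange a tuple of reals in decreasing order. -/
def sortedDesc {n : ℕ} (v : Fin n → ℝ) : Fin n → ℝ :=
  fun i => v (Tuple.sort v i.rev)

/-- The decreasingly ordered singular values of a matrix. -/
def svalsFin {m n : ℕ} (M : Matrix (Fin m) (Fin n) ℂ) : Fin n → ℝ :=
  sortedDesc fun i =>
    Real.sqrt ((Matrix.posSemidef_conjTranspose_mul_self M).1.eigenvalues i)

/-- The `k`-th largest singular value (0-indexed; padded with zeros). -/
def sval {m n : ℕ} (M : Matrix (Fin m) (Fin n) ℂ) (k : ℕ) : ℝ :=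
  if h : k < n then svalsFin M ⟨k, h⟩ else 0

/-- The realignment `R(M)_{(b,b'),(a,a')} = M_{(a,b),(a',b')}` of a bipartite matrix. -/
def realign {dA dB : ℕ} (M : Matrix (Fin dA × Fin dB) (Fin dA × Fin dB) ℂ) :
    Matrix (Fin (dB * dB)) (Fin (dA * dA)) ℂ :=
  Matrix.of fun b a =>
    M ((finProdFinEquiv.symm a).1, (finProdFinEquiv.symm b).1)
      ((finProdFinEquiv.symm a).2, (finProdFinEquiv.symm b).2)

/-- The trace norm `‖M‖₁ = Tr[(M†M)^{1/2}]`. -/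
def traceNorm {m n : Type*} [Fintype m] [Fintype n] [DecidableEq n] (M : Matrix m n ℂ) : ℝ :=
  ∑ i, Real.sqrt ((Matrix.posSemidef_conjTranspose_mul_self M).1.eigenvalues i)

/-- Trace distance. -/
def traceDist [Fintype ι] [DecidableEq ι] (ρ σ : Matrix ι ι ℂ) : ℝ :=
  (1 / 2) * traceNorm (ρ - σ)

/-- The smallest eigenvalue of a Hermitian matrix. -/
def lamMin [Fintype ι] [DecidableEq ι] (σ : Matrix ι ι ℂ) : ℝ :=
  if hσ : σ.IsHermitian then ⨅ i, hσ.eigenvalues i else 0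

/-- `D_max(ρ‖σ) = log₂ ‖σ^{-1/2} ρ σ^{-1/2}‖_∞`. -/
def dMax {d : ℕ} (ρ σ : Matrix (Fin d) (Fin d) ℂ) : ℝ :=
  Real.logb 2 (sval (matPow σ (-(1 / 2)) * ρ * matPow σ (-(1 / 2))) 0)

/-- `Tr[ρ log₂ σ]`, evaluated through a spectral decomposition of `σ`. -/
def trlog2 [Fintype ι] [DecidableEq ι] (ρ σ : Matrix ι ι ℂ) : ℝ :=
  if hσ : σ.IsHermitian then
    ∑ j, Real.logb 2 (hσ.eigenvalues j) *
      ((star (hσ.eigenvectorUnitary : Matrix ι ι ℂ) * ρ *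
        (hσ.eigenvectorUnitary : Matrix ι ι ℂ)) j j).re
  else 0

/-- The quantum relative entropy `D(ρ‖σ) = Tr[ρ log₂ ρ] − Tr[ρ log₂ σ]` (base 2). -/
def relEnt [Fintype ι] [DecidableEq ι] (ρ σ : Matrix ι ι ℂ) : ℝ :=
  trlog2 ρ ρ - trlog2 ρ σ

/-- The input-dependent contraction coefficient of the relative entropy. -/
def etaRelEnt [Fintype ιA] [DecidableEq ιA] [Fintype ιB] [DecidableEq ιB]
    (E : Matrix ιA ιA ℂ → Matrix ιB ιB ℂ) (σ : Matrix ιA ιA ℂ) : ℝ :=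
  sSup { r : ℝ | ∃ ρ : Matrix ιA ιA ℂ, IsDensity ρ ∧ ρ ≠ σ ∧ SuppLE ρ σ ∧
    r = relEnt (E ρ) (E σ) / relEnt ρ σ }

/-- The product state `ρ_AB ⊗ σ_{A'B'}` regarded as a bipartite matrix on
`(AA') ⊗ (BB')`. -/
def prodState {dA dB dA' dB' : ℕ}
    (ρ : Matrix (Fin dA × Fin dB) (Fin dA × Fin dB) ℂ)
    (σ : Matrix (Fin dA' × Fin dB') (Fin dA' × Fin dB') ℂ) :
    Matrix ((Fin dA × Fin dA') × (Fin dB × Fin dB'))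
      ((Fin dA × Fin dA') × (Fin dB × Fin dB')) ℂ :=
  Matrix.of fun x y =>
    ρ (x.1.1, x.2.1) (y.1.1, y.2.1) * σ (x.1.2, x.2.2) (y.1.2, y.2.2)

/-- The `n`-fold product state `ρ^{⊗n}` regarded as bipartite with parts `Aⁿ` and `Bⁿ`. -/
def prodPow {dA dB : ℕ} (ρ : Matrix (Fin dA × Fin dB) (Fin dA × Fin dB) ℂ) (n : ℕ) :
    Matrix ((Fin n → Fin dA) × (Fin n → Fin dB)) ((Fin n → Fin dA) × (Fin n → Fin dB)) ℂ :=
  Matrix.of fun x y => ∏ l, ρ (x.1 l, x.2 l) (y.1 l, y.2 l)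

/-- `μ^Lin_{f_k}` in the positive-definite-marginal normalization
`⟨X,X⟩ = Tr[X† ρ_A^k X ρ_A^{1−k}]`. -/
def muLin9 {dA dB : ℕ} (k : ℝ) (ρ : Matrix (Fin dA × Fin dB) (Fin dA × Fin dB) ℂ) : ℝ :=
  sSup { r : ℝ | ∃ (X : Matrix (Fin dA) (Fin dA) ℂ) (Y : Matrix (Fin dB) (Fin dB) ℂ),
    (ptraceB ρ * X).trace = 0 ∧ (ptraceA ρ * Y).trace = 0 ∧
    (Xᴴ * matPow (ptraceB ρ) k * X * matPow (ptraceB ρ) (1 - k)).trace = 1 ∧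
    (Yᴴ * matPow (ptraceA ρ) k * Y * matPow (ptraceA ρ) (1 - k)).trace = 1 ∧
    r = ‖((X ⊗ₖ Yᴴ) * ρ).trace‖ }

/-- `χ²_GM(ρ‖σ) = Tr[(ρ−σ)σ^{−1/2}(ρ−σ)σ^{−1/2}]` for positive definite `σ`. -/
def chiGM16 {d : ℕ} (ρ σ : Matrix (Fin d) (Fin d) ℂ) : ℝ :=
  (((ρ - σ) * matPow σ (-(1 / 2)) * (ρ - σ) * matPow σ (-(1 / 2))).trace).re

/-- `η_{χ²_GM}(E,σ)` (no support restriction, `σ` positive definite). -/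
def etaGM16 {dA dB : ℕ} (E : Matrix (Fin dA) (Fin dA) ℂ → Matrix (Fin dB) (Fin dB) ℂ)
    (σ : Matrix (Fin dA) (Fin dA) ℂ) : ℝ :=
  sSup { r : ℝ | ∃ ρ : Matrix (Fin dA) (Fin dA) ℂ, IsDensity ρ ∧ ρ ≠ σ ∧
    r = chiGM16 (E ρ) (E σ) / chiGM16 ρ σ }

/-- A dimension-indexed family of functionals satisfying the data processing inequality. -/
def DPIFamily (D : (d : ℕ) → Matrix (Fin d) (Fin d) ℂ → Matrix (Fin d) (Fin d) ℂ → ℝ) :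
    Prop :=
  ∀ (d d' : ℕ) (Φ : Matrix (Fin d) (Fin d) ℂ → Matrix (Fin d') (Fin d') ℂ),
    IsQChannel Φ → ∀ ρ₁ ρ₂ : Matrix (Fin d) (Fin d) ℂ, IsDensity ρ₁ → IsDensity ρ₂ →
      D d' (Φ ρ₁) (Φ ρ₂) ≤ D d ρ₁ ρ₂

/-- The contraction coefficient of a functional family. -/
def etaD {dA dB : ℕ}
    (D : (d : ℕ) → Matrix (Fin d) (Fin d) ℂ → Matrix (Fin d) (Fin d) ℂ → ℝ)
    (E : Matrix (Fin dA) (Fin dA) ℂ → Matrix (Fin dB) (Fin dB) ℂ)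
    (σ : Matrix (Fin dA) (Fin dA) ℂ) : ℝ :=
  sSup { r : ℝ | ∃ ρ : Matrix (Fin dA) (Fin dA) ℂ, IsDensity ρ ∧ ρ ≠ σ ∧
    D dA ρ σ ≠ 0 ∧ r = D dB (E ρ) (E σ) / D dA ρ σ }

/-- `J_{f,ρ⊗σ} = J_{f,ρ} ⊗ J_{f,σ}` for all positive definite density matrices. -/
def JmapMultiplicative (f : ℝ → ℝ) (dA dA' : ℕ) : Prop :=
  ∀ (ρ : Matrix (Fin dA) (Fin dA) ℂ) (σ : Matrix (Fin dA') (Fin dA') ℂ),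
    ρ.PosDef → ρ.trace = 1 → σ.PosDef → σ.trace = 1 →
    ∀ M : Matrix (Fin dA × Fin dA') (Fin dA × Fin dA') ℂ,
      Jmap f (ρ ⊗ₖ σ) M = mapKron (Jmap f ρ) (Jmap f σ) M

section IsometryAux

variable {n m : Type*} [Fintype n] [DecidableEq n] [Fintype m] [DecidableEq m]

private lemma conj_pow_mulV (σ : Matrix n n ℂ) (V : Matrix m n ℂ) (hV : Vᴴ * V = 1) (k : ℕ) :
    (V * σ * Vᴴ) ^ k * V = V * σ ^ k := by
  induction k with
  | zero => simp
  | succ k ih =>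
    rw [pow_succ, pow_succ, Matrix.mul_assoc ((V * σ * Vᴴ) ^ k) (V * σ * Vᴴ) V,
      Matrix.mul_assoc (V * σ) Vᴴ V, hV, Matrix.mul_one, ← Matrix.mul_assoc, ih,
      Matrix.mul_assoc]

private lemma aeval_conj_mulV (σ : Matrix n n ℂ) (V : Matrix m n ℂ) (hV : Vᴴ * V = 1)
    (q : Polynomial ℂ) :
    Polynomial.aeval (V * σ * Vᴴ) q * V = V * Polynomial.aeval σ q := by
  induction q using Polynomial.induction_on' with
  | add p q hp hq => rw [map_add, map_add, Matrix.add_mul, Matrix.mul_add, hp, hq]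
  | monomial k a =>
    simp only [Polynomial.aeval_monomial, Matrix.mul_assoc, Algebra.algebraMap_eq_smul_one,
      Matrix.smul_mul, Matrix.one_mul, Matrix.mul_smul]
    rw [← Matrix.mul_assoc, conj_pow_mulV σ V hV k]

private lemma aeval_conj (σ : Matrix n n ℂ) (V : Matrix m n ℂ) (hV : Vᴴ * V = 1)
    (q : Polynomial ℂ) (hq : q.coeff 0 = 0) :
    Polynomial.aeval (V * σ * Vᴴ) q = V * Polynomial.aeval σ q * Vᴴ := by
  obtain ⟨r, rfl⟩ := Polynomial.X_dvd_iff.mpr hq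
  rw [mul_comm Polynomial.X r, _root_.map_mul, _root_.map_mul, Polynomial.aeval_X, Polynomial.aeval_X,
    ← Matrix.mul_assoc, ← Matrix.mul_assoc, aeval_conj_mulV σ V hV r, Matrix.mul_assoc V,
    Matrix.mul_assoc V]

private lemma unitary_conj_aeval (U : Matrix n n ℂ) (hU2 : U * Uᴴ = 1)
    (hU1 : Uᴴ * U = 1) (D : Matrix n n ℂ) (q : Polynomial ℂ) :
    Polynomial.aeval (U * D * Uᴴ) q = U * Polynomial.aeval D q * Uᴴ := by
  calc Polynomial.aeval (U * D * Uᴴ) q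
      = Polynomial.aeval (U * D * Uᴴ) q * (U * Uᴴ) := by rw [hU2, Matrix.mul_one]
    _ = (Polynomial.aeval (U * D * Uᴴ) q * U) * Uᴴ := (Matrix.mul_assoc _ U Uᴴ).symm
    _ = U * Polynomial.aeval D q * Uᴴ := by rw [aeval_conj_mulV D U hU1 q]

private lemma aeval_diagonal (d : n → ℂ) (q : Polynomial ℂ) :
    Polynomial.aeval (Matrix.diagonal d) q =
      Matrix.diagonal (fun i => Polynomial.aeval (d i) q) := by
  have h := Polynomial.aeval_algHom_apply
    (Matrix.diagonalAlgHom ℂ : (n → ℂ) →ₐ[ℂ] Matrix n n ℂ) d q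
  simp only [Matrix.diagonalAlgHom_apply] at h
  rw [h]
  refine congrArg Matrix.diagonal (funext fun i => ?_)
  exact (Polynomial.aeval_algHom_apply (Pi.evalAlgHom ℂ (fun _ : n => ℂ) i) d q).symm

private lemma matFun_poly (σ : Matrix n n ℂ) (hσ : σ.IsHermitian) (p : Polynomial ℝ) :
    matFun (fun x => p.eval x) σ = Polynomial.aeval σ (p.map (algebraMap ℝ ℂ)) := by
  have hU1 : (star (hσ.eigenvectorUnitary : Matrix n n ℂ)) *
      (hσ.eigenvectorUnitary : Matrix n n ℂ) = 1 := hσ.eigenvectorUnitary.2.1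
  have hU2 : (hσ.eigenvectorUnitary : Matrix n n ℂ) *
      (star (hσ.eigenvectorUnitary : Matrix n n ℂ)) = 1 := hσ.eigenvectorUnitary.2.2
  rw [matFun, dif_pos hσ]
  conv_rhs => rw [hσ.spectral_theorem, Unitary.conjStarAlgAut_apply]
  rw [Matrix.star_eq_conjTranspose] at hU1 hU2 ⊢
  rw [unitary_conj_aeval _ hU2 hU1, aeval_diagonal]
  refine congrArg₂ _ (congrArg₂ _ rfl (congrArg Matrix.diagonal (funext fun i => ?_))) rfl
  rw [Polynomial.aeval_map_algebraMap]
  have h1 : (RCLike.ofReal ∘ hσ.eigenvalues) i = algebraMap ℝ ℂ (hσ.eigenvalues i) := rfl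
  rw [h1, Polynomial.aeval_algebraMap_apply, Polynomial.coe_aeval_eq_eval]
  rfl

private lemma matFun_congr {g h : ℝ → ℝ} (σ : Matrix n n ℂ) (hσ : σ.IsHermitian)
    (H : ∀ i, g (hσ.eigenvalues i) = h (hσ.eigenvalues i)) :
    matFun g σ = matFun h σ := by
  rw [matFun, matFun, dif_pos hσ, dif_pos hσ]
  exact congrArg₂ _ (congrArg₂ _ rfl (congrArg Matrix.diagonal
    (funext fun i => by rw [H i]))) rfl

/-- Key transfer lemma: spectral functions with `g 0 = 0` commute with isometry
conjugation. -/
private lemma matFun_conj (g : ℝ → ℝ) (hg : g 0 = 0) (σ : Matrix n n ℂ)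
    (hσ : σ.IsHermitian) (V : Matrix m n ℂ) (hV : Vᴴ * V = 1) :
    matFun g (V * σ * Vᴴ) = V * matFun g σ * Vᴴ := by
  classical
  have hσ' : (V * σ * Vᴴ).IsHermitian := Matrix.isHermitian_mul_mul_conjTranspose V hσ
  set s : Finset ℝ := insert 0 ((Finset.univ.image hσ.eigenvalues) ∪
    (Finset.univ.image hσ'.eigenvalues)) with hs
  set p : Polynomial ℝ := Lagrange.interpolate s id g with hp
  have hinj : Set.InjOn (id : ℝ → ℝ) s := Function.injective_id.injOn
  have heval : ∀ x ∈ s, p.eval x = g x := by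
    intro x hx
    rw [hp]
    simpa using Lagrange.eval_interpolate_at_node g hinj hx
  have hp0 : p.coeff 0 = 0 := by
    rw [Polynomial.coeff_zero_eq_eval_zero, heval 0 (Finset.mem_insert_self 0 _), hg]
  have h1 : matFun g σ = Polynomial.aeval σ (p.map (algebraMap ℝ ℂ)) := by
    rw [← matFun_poly σ hσ]
    refine matFun_congr σ hσ fun i => ?_
    exact (heval _ (Finset.mem_insert_of_mem (Finset.mem_union_left _
      (Finset.mem_image_of_mem _ (Finset.mem_univ i))))).symm
  have h2 : matFun g (V * σ * Vᴴ) = Polynomial.aeval (V * σ * Vᴴ)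
      (p.map (algebraMap ℝ ℂ)) := by
    rw [← matFun_poly _ hσ']
    refine matFun_congr _ hσ' fun i => ?_
    exact (heval _ (Finset.mem_insert_of_mem (Finset.mem_union_right _
      (Finset.mem_image_of_mem _ (Finset.mem_univ i))))).symm
  rw [h1, h2]
  refine aeval_conj σ V hV _ ?_
  rw [Polynomial.coeff_map, hp0, map_zero]

private lemma isometry_mid (V : Matrix m n ℂ) (hV : Vᴴ * V = 1) (P Q : Matrix n n ℂ) :
    (V * P * Vᴴ) * (V * Q * Vᴴ) = V * (P * Q) * Vᴴ := by
  rw [Matrix.mul_assoc (V * P) Vᴴ (V * Q * Vᴴ), Matrix.mul_assoc V Q Vᴴ,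
    ← Matrix.mul_assoc Vᴴ V (Q * Vᴴ), hV, Matrix.one_mul,
    ← Matrix.mul_assoc (V * P) Q Vᴴ, Matrix.mul_assoc V P Q]

private lemma trace_conj_isometry (V : Matrix m n ℂ) (hV : Vᴴ * V = 1) (M : Matrix n n ℂ) :
    (V * M * Vᴴ).trace = M.trace := by
  rw [Matrix.trace_mul_comm (V * M) Vᴴ, ← Matrix.mul_assoc, hV, Matrix.one_mul]

private lemma trace_ADBD (A B : Matrix n n ℂ) (d e : n → ℂ) :
    (A * Matrix.diagonal d * B * Matrix.diagonal e).trace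
      = ∑ i, ∑ j, d i * e j * (A j i * B i j) := by
  have h1 : ∀ M : Matrix n n ℂ, (M * Matrix.diagonal e).trace = ∑ j, M j j * e j := by
    intro M
    rw [Matrix.trace]
    exact Finset.sum_congr rfl fun j _ => by rw [Matrix.diag_apply, Matrix.mul_diagonal]
  rw [h1]
  have h2 : ∀ j, (A * Matrix.diagonal d * B) j j = ∑ i, A j i * d i * B i j := by
    intro j
    rw [Matrix.mul_apply]
    exact Finset.sum_congr rfl fun i _ => by rw [Matrix.mul_diagonal]
  simp only [h2, Finset.sum_mul]
  rw [Finset.sum_comm]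
  exact Finset.sum_congr rfl fun i _ => Finset.sum_congr rfl fun j _ => by ring

private lemma stdBasis_diag (i : n) :
    Matrix.single i i (1 : ℂ) = Matrix.diagonal (fun k => if k = i then 1 else 0) := by
  ext a b
  simp only [Matrix.single, Matrix.diagonal, Matrix.of_apply]
  aesop

private lemma conj_trace_form (U : Matrix n n ℂ) (hU1 : Uᴴ * U = 1) (hU2 : U * Uᴴ = 1)
    (X : Matrix n n ℂ) (D E : Matrix n n ℂ) :
    (Xᴴ * (U * D * Uᴴ) * X * (U * E * Uᴴ)).trace
      = ((Uᴴ * Xᴴ * U) * D * (Uᴴ * X * U) * E).trace := by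
  have hconj : ∀ M : Matrix n n ℂ, U * (Uᴴ * M * U) * Uᴴ = M := by
    intro M
    simp only [← Matrix.mul_assoc]
    rw [hU2, Matrix.one_mul, Matrix.mul_assoc M U Uᴴ, hU2, Matrix.mul_one]
  have key : ∀ Y Z : Matrix n n ℂ,
      (U * (Uᴴ * Y * U) * Uᴴ) * (U * D * Uᴴ) * (U * (Uᴴ * Z * U) * Uᴴ) * (U * E * Uᴴ)
        = U * ((Uᴴ * Y * U) * D * (Uᴴ * Z * U) * E) * Uᴴ := by
    intro Y Z
    rw [isometry_mid U hU1, isometry_mid U hU1, isometry_mid U hU1]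
  calc (Xᴴ * (U * D * Uᴴ) * X * (U * E * Uᴴ)).trace
      = ((U * (Uᴴ * Xᴴ * U) * Uᴴ) * (U * D * Uᴴ) * (U * (Uᴴ * X * U) * Uᴴ)
          * (U * E * Uᴴ)).trace := by rw [hconj Xᴴ, hconj X]
    _ = (U * ((Uᴴ * Xᴴ * U) * D * (Uᴴ * X * U) * E) * Uᴴ).trace := by rw [key]
    _ = ((Uᴴ * Xᴴ * U) * D * (Uᴴ * X * U) * E).trace := trace_conj_isometry U hU1 _

private lemma trace_eigProj_pair {σ : Matrix n n ℂ} (hσ : σ.IsHermitian)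
    (X : Matrix n n ℂ) (i j : n) :
    (Xᴴ * eigProj hσ i * X * eigProj hσ j).trace =
      ((hσ.eigenvectorUnitary : Matrix n n ℂ)ᴴ * Xᴴ * (hσ.eigenvectorUnitary : Matrix n n ℂ)) j i
        * ((hσ.eigenvectorUnitary : Matrix n n ℂ)ᴴ * X * (hσ.eigenvectorUnitary : Matrix n n ℂ)) i j := by
  have hU1 : (hσ.eigenvectorUnitary : Matrix n n ℂ)ᴴ * (hσ.eigenvectorUnitary : Matrix n n ℂ) = 1 := by
    rw [← Matrix.star_eq_conjTranspose]; exact hσ.eigenvectorUnitary.2.1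
  have hU2 : (hσ.eigenvectorUnitary : Matrix n n ℂ) * (hσ.eigenvectorUnitary : Matrix n n ℂ)ᴴ = 1 := by
    rw [← Matrix.star_eq_conjTranspose]; exact hσ.eigenvectorUnitary.2.2
  rw [eigProj, eigProj, Matrix.star_eq_conjTranspose, stdBasis_diag, stdBasis_diag,
    conj_trace_form _ hU1 hU2, trace_ADBD]
  simp

private lemma matFun_ind_eq (σ : Matrix n n ℂ) (hσ : σ.IsHermitian) (μ : ℝ) :
    matFun (fun x => if x = μ then 1 else 0) σ =
      (hσ.eigenvectorUnitary : Matrix n n ℂ) *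
        Matrix.diagonal (fun i => if hσ.eigenvalues i = μ then (1 : ℂ) else 0) *
        (hσ.eigenvectorUnitary : Matrix n n ℂ)ᴴ := by
  rw [matFun, dif_pos hσ, Matrix.star_eq_conjTranspose]
  exact congrArg₂ _ (congrArg₂ _ rfl (congrArg Matrix.diagonal
    (funext fun i => by split_ifs <;> simp))) rfl

private lemma trace_matFun_pair (σ : Matrix n n ℂ) (hσ : σ.IsHermitian)
    (X : Matrix n n ℂ) (μ ν : ℝ) :
    (Xᴴ * matFun (fun x => if x = μ then 1 else 0) σ * X *
        matFun (fun x => if x = ν then 1 else 0) σ).trace =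
      ∑ i, ∑ j, (if hσ.eigenvalues i = μ then (1:ℂ) else 0) *
        (if hσ.eigenvalues j = ν then (1:ℂ) else 0) *
        (((hσ.eigenvectorUnitary : Matrix n n ℂ)ᴴ * Xᴴ * (hσ.eigenvectorUnitary : Matrix n n ℂ)) j i
          * ((hσ.eigenvectorUnitary : Matrix n n ℂ)ᴴ * X * (hσ.eigenvectorUnitary : Matrix n n ℂ)) i j) := by
  have hU1 : (hσ.eigenvectorUnitary : Matrix n n ℂ)ᴴ * (hσ.eigenvectorUnitary : Matrix n n ℂ) = 1 := by
    rw [← Matrix.star_eq_conjTranspose]; exact hσ.eigenvectorUnitary.2.1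
  have hU2 : (hσ.eigenvectorUnitary : Matrix n n ℂ) * (hσ.eigenvectorUnitary : Matrix n n ℂ)ᴴ = 1 := by
    rw [← Matrix.star_eq_conjTranspose]; exact hσ.eigenvectorUnitary.2.2
  rw [matFun_ind_eq σ hσ μ, matFun_ind_eq σ hσ ν, conj_trace_form _ hU1 hU2, trace_ADBD]

private lemma sum_reorder (S : Finset ℝ) (F : ℝ → ℝ → n → n → ℂ) :
    (∑ μ ∈ S, ∑ ν ∈ S, ∑ i : n, ∑ j : n, F μ ν i j)
      = ∑ i : n, ∑ j : n, ∑ μ ∈ S, ∑ ν ∈ S, F μ ν i j := by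
  calc (∑ μ ∈ S, ∑ ν ∈ S, ∑ i : n, ∑ j : n, F μ ν i j)
      = ∑ μ ∈ S, ∑ i : n, ∑ ν ∈ S, ∑ j : n, F μ ν i j :=
        Finset.sum_congr rfl fun μ _ => Finset.sum_comm
    _ = ∑ i : n, ∑ μ ∈ S, ∑ ν ∈ S, ∑ j : n, F μ ν i j := Finset.sum_comm
    _ = ∑ i : n, ∑ μ ∈ S, ∑ j : n, ∑ ν ∈ S, F μ ν i j :=
        Finset.sum_congr rfl fun i _ => Finset.sum_congr rfl fun μ _ => Finset.sum_comm
    _ = ∑ i : n, ∑ j : n, ∑ μ ∈ S, ∑ ν ∈ S, F μ ν i j :=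
        Finset.sum_congr rfl fun i _ => Finset.sum_comm

private lemma innerF_grouped (f : ℝ → ℝ) (σ : Matrix n n ℂ) (hσ : σ.IsHermitian)
    (X : Matrix n n ℂ) (S : Finset ℝ)
    (hS : ∀ i, hσ.eigenvalues i ∈ S ↔ 0 < hσ.eigenvalues i) :
    innerF f σ X = ∑ μ ∈ S, ∑ ν ∈ S,
      ((ν * f (μ / ν) : ℝ) : ℂ) *
        (Xᴴ * matFun (fun x => if x = μ then 1 else 0) σ * X *
          matFun (fun x => if x = ν then 1 else 0) σ).trace := by
  classical
  simp only [trace_matFun_pair σ hσ X, Finset.mul_sum]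
  rw [sum_reorder, innerF, dif_pos hσ]
  refine Finset.sum_congr rfl fun i _ => Finset.sum_congr rfl fun j _ => ?_
  rw [trace_eigProj_pair hσ X i j]
  simp only [mul_ite, mul_one, mul_zero, ite_mul, one_mul, zero_mul]
  have pull : ∀ (T : Finset ℝ) (c : Prop) (_ : Decidable c) (g : ℝ → ℂ),
      (∑ ν ∈ T, if c then g ν else 0) = if c then ∑ ν ∈ T, g ν else 0 := by
    intro T c hc g
    split <;> simp
  rw [Finset.sum_congr rfl (fun μ _ => Finset.sum_ite_eq S (hσ.eigenvalues j) _),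
    pull S _ _ _, Finset.sum_ite_eq S (hσ.eigenvalues i)]
  simp only [hS i, hS j]
  by_cases h1 : 0 < hσ.eigenvalues i <;> by_cases h2 : 0 < hσ.eigenvalues j <;>
    simp [h1, h2]

private lemma innerF_conj (f : ℝ → ℝ) (σ : Matrix n n ℂ) (hσ : σ.IsHermitian)
    (V : Matrix m n ℂ) (hV : Vᴴ * V = 1) (X : Matrix n n ℂ) :
    innerF f (V * σ * Vᴴ) (V * X * Vᴴ) = innerF f σ X := by
  classical
  have hσ' : (V * σ * Vᴴ).IsHermitian := Matrix.isHermitian_mul_mul_conjTranspose V hσ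
  set S : Finset ℝ := ((Finset.univ.image hσ.eigenvalues).filter (fun x => 0 < x)) ∪
    ((Finset.univ.image hσ'.eigenvalues).filter (fun x => 0 < x)) with hSdef
  have hSpos : ∀ μ ∈ S, 0 < μ := by
    intro μ hμ
    rcases Finset.mem_union.mp hμ with h | h
    · exact (Finset.mem_filter.mp h).2
    · exact (Finset.mem_filter.mp h).2
  have hS1 : ∀ i, hσ.eigenvalues i ∈ S ↔ 0 < hσ.eigenvalues i := by
    intro i
    refine ⟨hSpos _, fun h => Finset.mem_union_left _ (Finset.mem_filter.mpr
      ⟨Finset.mem_image_of_mem _ (Finset.mem_univ i), h⟩)⟩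
  have hS2 : ∀ i, hσ'.eigenvalues i ∈ S ↔ 0 < hσ'.eigenvalues i := by
    intro i
    refine ⟨hSpos _, fun h => Finset.mem_union_right _ (Finset.mem_filter.mpr
      ⟨Finset.mem_image_of_mem _ (Finset.mem_univ i), h⟩)⟩
  rw [innerF_grouped f σ hσ X S hS1, innerF_grouped f _ hσ' _ S hS2]
  refine Finset.sum_congr rfl fun μ hμ => Finset.sum_congr rfl fun ν hν => ?_
  congr 1
  have hμ0 : (fun x : ℝ => if x = μ then (1:ℝ) else 0) 0 = 0 := by
    simp only []
    exact if_neg fun h => (hSpos μ hμ).ne' (h.symm)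
  have hν0 : (fun x : ℝ => if x = ν then (1:ℝ) else 0) 0 = 0 := by
    simp only []
    exact if_neg fun h => (hSpos ν hν).ne' (h.symm)
  have hXH : (V * X * Vᴴ)ᴴ = V * Xᴴ * Vᴴ := by
    simp [Matrix.conjTranspose_mul, Matrix.mul_assoc]
  rw [matFun_conj (fun x : ℝ => if x = μ then 1 else 0) hμ0 σ hσ V hV,
    matFun_conj (fun x : ℝ => if x = ν then 1 else 0) hν0 σ hσ V hV, hXH,
    isometry_mid V hV, isometry_mid V hV, isometry_mid V hV, trace_conj_isometry V hV]

private lemma suppProj_eq_matFun (σ : Matrix n n ℂ) :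
    suppProj σ = matFun (fun x => if 0 < x then 1 else 0) σ := by
  rw [suppProj, matFun]
  split
  · exact congrArg₂ _ (congrArg₂ _ rfl (congrArg Matrix.diagonal
      (funext fun i => by split_ifs <;> simp))) rfl
  · rfl

private lemma suppProj_conj (σ : Matrix n n ℂ) (hσ : σ.IsHermitian)
    (V : Matrix m n ℂ) (hV : Vᴴ * V = 1) :
    suppProj (V * σ * Vᴴ) = V * suppProj σ * Vᴴ := by
  rw [suppProj_eq_matFun, suppProj_eq_matFun,
    matFun_conj (fun x : ℝ => if 0 < x then 1 else 0) (by norm_num) σ hσ V hV]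

end IsometryAux

section BipartiteAux

variable {κA κB κA' κB' : Type*} [Fintype κA] [DecidableEq κA] [Fintype κB] [DecidableEq κB]
  [Fintype κA'] [DecidableEq κA'] [Fintype κB'] [DecidableEq κB']

private lemma ptraceB_isHermitian {ρ : Matrix (κA × κB) (κA × κB) ℂ}
    (hρ : ρ.IsHermitian) : (ptraceB ρ).IsHermitian := by
  refine Matrix.IsHermitian.ext fun i j => ?_
  simp only [ptraceB, Matrix.of_apply, star_sum]
  exact Finset.sum_congr rfl fun b _ => hρ.apply (i, b) (j, b)

private lemma ptraceA_isHermitian {ρ : Matrix (κA × κB) (κA × κB) ℂ}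
    (hρ : ρ.IsHermitian) : (ptraceA ρ).IsHermitian := by
  refine Matrix.IsHermitian.ext fun i j => ?_
  simp only [ptraceA, Matrix.of_apply, star_sum]
  exact Finset.sum_congr rfl fun a _ => hρ.apply (a, i) (a, j)

private lemma kron_conjTranspose (A : Matrix κA' κA ℂ) (B : Matrix κB' κB ℂ) :
    (A ⊗ₖ B)ᴴ = Aᴴ ⊗ₖ Bᴴ := by
  ext ⟨i, j⟩ ⟨k, l⟩
  simp [Matrix.conjTranspose_apply, Matrix.kroneckerMap_apply, mul_comm]

private lemma trace_mul_stdBasis (P : Matrix κA κA ℂ) (a a' : κA) :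
    (P * Matrix.single a' a (1:ℂ)).trace = P a a' := by
  simp only [Matrix.trace, Matrix.diag_apply, Matrix.mul_apply, Matrix.single,
    Matrix.of_apply, mul_ite, mul_one, mul_zero]
  simp [ite_and, Finset.sum_ite_eq]

private lemma trace_kron_one (M : Matrix (κA × κB) (κA × κB) ℂ) (N : Matrix κA κA ℂ) :
    (M * (N ⊗ₖ (1 : Matrix κB κB ℂ))).trace = (ptraceB M * N).trace := by
  simp only [Matrix.trace, Matrix.diag_apply, Matrix.mul_apply, Matrix.kroneckerMap_apply,
    ptraceB, Matrix.of_apply, Matrix.one_apply, Fintype.sum_prod_type, mul_ite, mul_one,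
    mul_zero, Finset.sum_ite_eq', Finset.mem_univ, if_true, Finset.sum_mul]
  exact Finset.sum_congr rfl fun a _ => Finset.sum_comm

private lemma trace_one_kron (M : Matrix (κA × κB) (κA × κB) ℂ) (N : Matrix κB κB ℂ) :
    (M * ((1 : Matrix κA κA ℂ) ⊗ₖ N)).trace = (ptraceA M * N).trace := by
  simp only [Matrix.trace, Matrix.diag_apply, Matrix.mul_apply, Matrix.kroneckerMap_apply,
    ptraceA, Matrix.of_apply, Matrix.one_apply, Fintype.sum_prod_type, ite_mul, one_mul,
    zero_mul, mul_ite, mul_one, mul_zero, Finset.sum_mul]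
  have pull : ∀ (c : Prop) (inst : Decidable c) (g : κB → ℂ),
      (∑ x3, if c then g x3 else 0) = if c then ∑ x3, g x3 else 0 := by
    intro c inst g; split <;> simp
  simp only [pull, Finset.sum_ite_eq', Finset.mem_univ, if_true]
  rw [Finset.sum_comm]
  exact Finset.sum_congr rfl fun b _ => Finset.sum_comm

private lemma trace_conj_cyc {p q : Type*} [Fintype p] [Fintype q] (K : Matrix p q ℂ)
    (ρ : Matrix q q ℂ) (T : Matrix p p ℂ) :
    ((K * ρ * Kᴴ) * T).trace = (ρ * (Kᴴ * T * K)).trace := by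
  rw [Matrix.mul_assoc K ρ Kᴴ, Matrix.mul_assoc K (ρ * Kᴴ) T, Matrix.trace_mul_comm,
    Matrix.mul_assoc (ρ * Kᴴ) T K, Matrix.mul_assoc ρ Kᴴ (T * K), Matrix.mul_assoc Kᴴ T K]

private lemma ptraceB_conj (ρ : Matrix (κA × κB) (κA × κB) ℂ)
    (V : Matrix κA' κA ℂ) (W : Matrix κB' κB ℂ) (hW : Wᴴ * W = 1) :
    ptraceB ((V ⊗ₖ W) * ρ * (V ⊗ₖ W)ᴴ) = V * ptraceB ρ * Vᴴ := by
  ext a a'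
  have hK : (V ⊗ₖ W)ᴴ * (Matrix.single a' a (1:ℂ) ⊗ₖ (1 : Matrix κB' κB' ℂ)) * (V ⊗ₖ W)
      = (Vᴴ * Matrix.single a' a (1:ℂ) * V) ⊗ₖ (1 : Matrix κB κB ℂ) := by
    rw [kron_conjTranspose, ← Matrix.mul_kronecker_mul, ← Matrix.mul_kronecker_mul,
      Matrix.mul_one, hW]
  calc ptraceB ((V ⊗ₖ W) * ρ * (V ⊗ₖ W)ᴴ) a a'
      = (ptraceB ((V ⊗ₖ W) * ρ * (V ⊗ₖ W)ᴴ) * Matrix.single a' a (1:ℂ)).trace :=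
        (trace_mul_stdBasis _ a a').symm
    _ = (((V ⊗ₖ W) * ρ * (V ⊗ₖ W)ᴴ) *
          (Matrix.single a' a (1:ℂ) ⊗ₖ (1 : Matrix κB' κB' ℂ))).trace :=
        (trace_kron_one _ _).symm
    _ = (ρ * ((V ⊗ₖ W)ᴴ * (Matrix.single a' a (1:ℂ) ⊗ₖ (1 : Matrix κB' κB' ℂ)) *
          (V ⊗ₖ W))).trace := trace_conj_cyc _ _ _
    _ = (ρ * ((Vᴴ * Matrix.single a' a (1:ℂ) * V) ⊗ₖ (1 : Matrix κB κB ℂ))).trace := by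
        rw [hK]
    _ = (ptraceB ρ * (Vᴴ * Matrix.single a' a (1:ℂ) * V)).trace := trace_kron_one _ _
    _ = ((V * ptraceB ρ * Vᴴ) * Matrix.single a' a (1:ℂ)).trace :=
        (trace_conj_cyc V (ptraceB ρ) _).symm
    _ = (V * ptraceB ρ * Vᴴ) a a' := trace_mul_stdBasis _ a a'

private lemma ptraceA_conj (ρ : Matrix (κA × κB) (κA × κB) ℂ)
    (V : Matrix κA' κA ℂ) (hV : Vᴴ * V = 1) (W : Matrix κB' κB ℂ) :
    ptraceA ((V ⊗ₖ W) * ρ * (V ⊗ₖ W)ᴴ) = W * ptraceA ρ * Wᴴ := by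
  ext b b'
  have hK : (V ⊗ₖ W)ᴴ * ((1 : Matrix κA' κA' ℂ) ⊗ₖ Matrix.single b' b (1:ℂ)) * (V ⊗ₖ W)
      = (1 : Matrix κA κA ℂ) ⊗ₖ (Wᴴ * Matrix.single b' b (1:ℂ) * W) := by
    rw [kron_conjTranspose, ← Matrix.mul_kronecker_mul, ← Matrix.mul_kronecker_mul,
      Matrix.mul_one, hV]
  calc ptraceA ((V ⊗ₖ W) * ρ * (V ⊗ₖ W)ᴴ) b b'
      = (ptraceA ((V ⊗ₖ W) * ρ * (V ⊗ₖ W)ᴴ) * Matrix.single b' b (1:ℂ)).trace :=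
        (trace_mul_stdBasis _ b b').symm
    _ = (((V ⊗ₖ W) * ρ * (V ⊗ₖ W)ᴴ) *
          ((1 : Matrix κA' κA' ℂ) ⊗ₖ Matrix.single b' b (1:ℂ))).trace :=
        (trace_one_kron _ _).symm
    _ = (ρ * ((V ⊗ₖ W)ᴴ * ((1 : Matrix κA' κA' ℂ) ⊗ₖ Matrix.single b' b (1:ℂ)) *
          (V ⊗ₖ W))).trace := trace_conj_cyc _ _ _
    _ = (ρ * ((1 : Matrix κA κA ℂ) ⊗ₖ (Wᴴ * Matrix.single b' b (1:ℂ) * W))).trace := by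
        rw [hK]
    _ = (ptraceA ρ * (Wᴴ * Matrix.single b' b (1:ℂ) * W)).trace := trace_one_kron _ _
    _ = ((W * ptraceA ρ * Wᴴ) * Matrix.single b' b (1:ℂ)).trace :=
        (trace_conj_cyc W (ptraceA ρ) _).symm
    _ = (W * ptraceA ρ * Wᴴ) b b' := trace_mul_stdBasis _ b b'

end BipartiteAux

section SandwichAux

variable {n m : Type*} [Fintype n] [DecidableEq n] [Fintype m] [DecidableEq m]

private lemma sandwich2 (V : Matrix m n ℂ) (P Q : Matrix n n ℂ) (Z : Matrix m m ℂ) :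
    (V * P * Vᴴ) * Z * (V * Q * Vᴴ) = V * (P * (Vᴴ * Z * V) * Q) * Vᴴ := by
  simp only [Matrix.mul_assoc]

private lemma unconj (V : Matrix m n ℂ) (hV : Vᴴ * V = 1) (M : Matrix n n ℂ) :
    Vᴴ * (V * M * Vᴴ) * V = M := by
  simp only [← Matrix.mul_assoc]
  rw [hV, Matrix.one_mul, Matrix.mul_assoc M Vᴴ V, hV, Matrix.mul_one]

end SandwichAux

/-- The `f`-maximal correlation coefficients are invariant under local
isometries. -/
theorem statement3 {dA dB dA' dB' : ℕ} (f : ℝ → ℝ)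
    (hf : IsOperatorMonotone f) (hf0 : ∀ x : ℝ, 0 < x → 0 ≤ f x) (hf1 : f 1 = 1)
    (ρ : Matrix (Fin dA × Fin dB) (Fin dA × Fin dB) ℂ) (hρ : IsDensity ρ)
    (V : Matrix (Fin dA') (Fin dA) ℂ) (hV : Vᴴ * V = 1)
    (W : Matrix (Fin dB') (Fin dB) ℂ) (hW : Wᴴ * W = 1) :
    muF f ρ = muF f ((V ⊗ₖ W) * ρ * (V ⊗ₖ W)ᴴ) ∧
    muLin f ρ = muLin f ((V ⊗ₖ W) * ρ * (V ⊗ₖ W)ᴴ) := by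
  classical
  have hmB : ptraceB ((V ⊗ₖ W) * ρ * (V ⊗ₖ W)ᴴ) = V * ptraceB ρ * Vᴴ := ptraceB_conj ρ V W hW
  have hmA : ptraceA ((V ⊗ₖ W) * ρ * (V ⊗ₖ W)ᴴ) = W * ptraceA ρ * Wᴴ := ptraceA_conj ρ V hV W
  have hHA : (ptraceB ρ).IsHermitian := ptraceB_isHermitian hρ.1.1
  have hHB : (ptraceA ρ).IsHermitian := ptraceA_isHermitian hρ.1.1
  -- value transfer
  have hval : ∀ (X : Matrix (Fin dA) (Fin dA) ℂ) (Y : Matrix (Fin dB) (Fin dB) ℂ),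
      (((V * X * Vᴴ) ⊗ₖ (W * Y * Wᴴ)ᴴ) * ((V ⊗ₖ W) * ρ * (V ⊗ₖ W)ᴴ)).trace
        = ((X ⊗ₖ Yᴴ) * ρ).trace := by
    intro X Y
    have hKiso : (V ⊗ₖ W)ᴴ * (V ⊗ₖ W) = 1 := by
      rw [kron_conjTranspose, ← Matrix.mul_kronecker_mul, hV, hW, Matrix.one_kronecker_one]
    have h1 : (W * Y * Wᴴ)ᴴ = W * Yᴴ * Wᴴ := by
      simp [Matrix.conjTranspose_mul, Matrix.mul_assoc]
    have h2 : (V * X * Vᴴ) ⊗ₖ (W * Yᴴ * Wᴴ)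
        = (V ⊗ₖ W) * (X ⊗ₖ Yᴴ) * (V ⊗ₖ W)ᴴ := by
      rw [Matrix.mul_kronecker_mul (V * X) Vᴴ (W * Yᴴ) Wᴴ,
        Matrix.mul_kronecker_mul V X W Yᴴ, kron_conjTranspose]
    rw [h1, h2, isometry_mid (V ⊗ₖ W) hKiso, trace_conj_isometry (V ⊗ₖ W) hKiso]
  -- generic transfer facts for an isometry
  have hsuppF : ∀ {k k' : ℕ} (U : Matrix (Fin k') (Fin k) ℂ) (hU : Uᴴ * U = 1)
      (σ X : Matrix (Fin k) (Fin k) ℂ), σ.IsHermitian →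
      suppProj σ * X * suppProj σ = X →
      suppProj (U * σ * Uᴴ) * (U * X * Uᴴ) * suppProj (U * σ * Uᴴ) = U * X * Uᴴ := by
    intro k k' U hU σ X hσ hX
    rw [suppProj_conj σ hσ U hU, isometry_mid U hU, isometry_mid U hU, hX]
  have htrF : ∀ {k k' : ℕ} (U : Matrix (Fin k') (Fin k) ℂ) (hU : Uᴴ * U = 1)
      (σ X : Matrix (Fin k) (Fin k) ℂ),
      ((U * σ * Uᴴ) * (U * X * Uᴴ)).trace = (σ * X).trace := by
    intro k k' U hU σ X
    rw [isometry_mid U hU, trace_conj_isometry U hU]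
  have hsuppB : ∀ {k k' : ℕ} (U : Matrix (Fin k') (Fin k) ℂ) (hU : Uᴴ * U = 1)
      (σ : Matrix (Fin k) (Fin k) ℂ) (X' : Matrix (Fin k') (Fin k') ℂ), σ.IsHermitian →
      suppProj (U * σ * Uᴴ) * X' * suppProj (U * σ * Uᴴ) = X' →
      (suppProj σ * (Uᴴ * X' * U) * suppProj σ = Uᴴ * X' * U ∧
        U * (Uᴴ * X' * U) * Uᴴ = X') := by
    intro k k' U hU σ X' hσ hX'
    rw [suppProj_conj σ hσ U hU] at hX'
    have h1 : suppProj σ * (Uᴴ * X' * U) * suppProj σ = Uᴴ * X' * U := by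
      conv_rhs => rw [← hX', sandwich2 U _ _ _, unconj U hU]
    refine ⟨h1, ?_⟩
    conv_rhs => rw [← hX', sandwich2 U _ _ _]
    conv_lhs => rw [← h1]
  constructor
  · -- muF case
    rw [muF, muF, hmB, hmA]
    congr 1
    ext r
    constructor
    · rintro ⟨X, Y, hXH, hYH, hXs, hYs, hXt, hYt, hXi, hYi, hr⟩
      refine ⟨V * X * Vᴴ, W * Y * Wᴴ,
        Matrix.isHermitian_mul_mul_conjTranspose V hXH,
        Matrix.isHermitian_mul_mul_conjTranspose W hYH,
        hsuppF V hV _ X hHA hXs, hsuppF W hW _ Y hHB hYs, ?_, ?_, ?_, ?_, ?_⟩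
      · rw [htrF V hV]; exact hXt
      · rw [htrF W hW]; exact hYt
      · rw [innerF_conj f _ hHA V hV]; exact hXi
      · rw [innerF_conj f _ hHB W hW]; exact hYi
      · rw [hval X Y]; exact hr
    · rintro ⟨X', Y', hXH', hYH', hXs', hYs', hXt', hYt', hXi', hYi', hr'⟩
      obtain ⟨hs1, he1⟩ := hsuppB V hV _ X' hHA hXs'
      obtain ⟨hs2, he2⟩ := hsuppB W hW _ Y' hHB hYs'
      refine ⟨Vᴴ * X' * V, Wᴴ * Y' * W,
        Matrix.isHermitian_conjTranspose_mul_mul V hXH',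
        Matrix.isHermitian_conjTranspose_mul_mul W hYH',
        hs1, hs2, ?_, ?_, ?_, ?_, ?_⟩
      · rw [← htrF V hV, he1]; exact hXt'
      · rw [← htrF W hW, he2]; exact hYt'
      · rw [← innerF_conj f _ hHA V hV, he1]; exact hXi'
      · rw [← innerF_conj f _ hHB W hW, he2]; exact hYi'
      · rw [← hval _ _, he1, he2]; exact hr'
  · -- muLin case
    rw [muLin, muLin, hmB, hmA]
    congr 1
    ext r
    constructor
    · rintro ⟨X, Y, hXs, hYs, hXt, hYt, hXi, hYi, hr⟩
      refine ⟨V * X * Vᴴ, W * Y * Wᴴ,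
        hsuppF V hV _ X hHA hXs, hsuppF W hW _ Y hHB hYs, ?_, ?_, ?_, ?_, ?_⟩
      · rw [htrF V hV]; exact hXt
      · rw [htrF W hW]; exact hYt
      · rw [innerF_conj f _ hHA V hV]; exact hXi
      · rw [innerF_conj f _ hHB W hW]; exact hYi
      · rw [hval X Y]; exact hr
    · rintro ⟨X', Y', hXs', hYs', hXt', hYt', hXi', hYi', hr'⟩
      obtain ⟨hs1, he1⟩ := hsuppB V hV _ X' hHA hXs'
      obtain ⟨hs2, he2⟩ := hsuppB W hW _ Y' hHB hYs'
      refine ⟨Vᴴ * X' * V, Wᴴ * Y' * W, hs1, hs2, ?_, ?_, ?_, ?_, ?_⟩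
      · rw [← htrF V hV, he1]; exact hXt'
      · rw [← htrF W hW, he2]; exact hYt'
      · rw [← innerF_conj f _ hHA V hV, he1]; exact hXi'
      · rw [← innerF_conj f _ hHB W hW, he2]; exact hYi'
      · rw [← hval _ _, he1, he2]; exact hr'

end QPaper
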